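/- Let R ≥ 1, η ∈ (0,1), s ∈ {+1,−1}, and let g_± be the entire extension of h_±(r) = h_{R+sη}(r)·h_η(r)/(π(sinh(2η)−2η)). Then for every L > 0 there exists a constant C = C(L,R,η) > 0 such that |g_±(r)| ≤ C·(1+|r|)^{−4} for all complex r with |Im(r)| < L. -/

import Mathlib

open Complex

/-- The closed-form Selberg transform of the indicator of a hyperbolic ball of
radius `ρ`, as a function of a complex spectral parameter `r`. -/
noncomputable def hSelC (ρ : ℝ) (r : ℂ) : ℂ :=
  2 * (Real.pi : ℂ) * Complex.sinh ((ρ : ℂ) * (1 + Complex.I * r)) /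
      (Complex.I * r * (1 + Complex.I * r))
    - 2 * (Real.pi : ℂ) * Complex.sinh ((ρ : ℂ) * (1 - Complex.I * r)) /
      (Complex.I * r * (1 - Complex.I * r))

lemma norm_sinh_le (z : ℂ) : ‖Complex.sinh z‖ ≤ Real.exp |z.re| := by
  rw [show Complex.sinh z = (Complex.exp z - Complex.exp (-z)) / 2 from rfl]
  have h1 : ‖Complex.exp z‖ ≤ Real.exp |z.re| := by
    rw [Complex.norm_exp]
    exact Real.exp_le_exp.2 (le_abs_self _)
  have h2 : ‖Complex.exp (-z)‖ ≤ Real.exp |z.re| := by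
    rw [Complex.norm_exp, Complex.neg_re]
    exact Real.exp_le_exp.2 (neg_le_abs _)
  calc ‖(Complex.exp z - Complex.exp (-z)) / 2‖
      = ‖Complex.exp z - Complex.exp (-z)‖ / 2 := by
        rw [norm_div]; norm_num
    _ ≤ (Real.exp |z.re| + Real.exp |z.re|) / 2 := by
        have := norm_sub_le (Complex.exp z) (Complex.exp (-z))
        linarith
    _ = Real.exp |z.re| := by ring

/-- Quadratic decay bound for `hSelC ρ` on a horizontal strip, away from the origin. -/
lemma hSelC_bound (ρ L : ℝ) (hρ : 0 ≤ ρ) (r : ℂ) (hr : 2 ≤ ‖r‖) (him : |r.im| ≤ L) :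
    ‖hSelC ρ r‖ ≤ 8 * Real.pi * Real.exp (ρ * (1 + L)) / ‖r‖ ^ 2 := by
  have hL : 0 ≤ L := le_trans (abs_nonneg _) him
  have hrpos : (0:ℝ) < ‖r‖ := lt_of_lt_of_le (by norm_num) hr
  -- norms of denominators
  have hIr : ‖Complex.I * r‖ = ‖r‖ := by
    rw [norm_mul, Complex.norm_I, one_mul]
  have hden : ∀ z : ℂ, z = 1 + Complex.I * r ∨ z = 1 - Complex.I * r → ‖r‖ / 2 ≤ ‖z‖ := by
    rintro z (rfl | rfl)
    · have h := norm_sub_le (1 + Complex.I * r) 1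
      simp only [add_sub_cancel_left] at h
      rw [hIr] at h
      have : ‖(1:ℂ)‖ = 1 := norm_one
      rw [this] at h
      linarith
    · have h := norm_sub_le (1 - Complex.I * r) 1
      have h2 : (1 - Complex.I * r) - 1 = -(Complex.I * r) := by ring
      rw [h2, norm_neg, hIr, norm_one] at h
      linarith
  -- bound the numerators
  have hsinh : ∀ z : ℂ, z = 1 + Complex.I * r ∨ z = 1 - Complex.I * r →
      ‖Complex.sinh ((ρ : ℂ) * z)‖ ≤ Real.exp (ρ * (1 + L)) := by
    rintro z hz
    refine (norm_sinh_le _).trans (Real.exp_le_exp.2 ?_)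
    have hre : |((ρ : ℂ) * z).re| ≤ ρ * (1 + L) := by
      have hzre : |z.re| ≤ 1 + L := by
        rcases hz with rfl | rfl <;>
        · simp only [Complex.add_re, Complex.sub_re, Complex.one_re, Complex.mul_re,
            Complex.I_re, Complex.I_im, zero_mul, one_mul, zero_sub]
          rw [abs_le]
          constructor <;> cases' abs_le.1 him with h1 h2 <;> nlinarith
      have : ((ρ : ℂ) * z).re = ρ * z.re := by
        simp [Complex.mul_re, Complex.ofReal_re, Complex.ofReal_im]
      rw [this, abs_mul, _root_.abs_of_nonneg hρ]
      exact mul_le_mul_of_nonneg_left hzre hρ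
    exact hre
  -- bound each fraction
  have key : ∀ z : ℂ, z = 1 + Complex.I * r ∨ z = 1 - Complex.I * r →
      ‖2 * (Real.pi : ℂ) * Complex.sinh ((ρ : ℂ) * z) / (Complex.I * r * z)‖
        ≤ 4 * Real.pi * Real.exp (ρ * (1 + L)) / ‖r‖ ^ 2 := by
    intro z hz
    rw [norm_div, norm_mul, norm_mul, norm_mul, hIr]
    have h2pi : ‖(2 : ℂ)‖ * ‖(Real.pi : ℂ)‖ = 2 * Real.pi := by
      simp [Complex.norm_real, _root_.abs_of_nonneg Real.pi_pos.le]
    rw [h2pi]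
    have hz2 := hden z hz
    have hz2' : (0:ℝ) < ‖z‖ := lt_of_lt_of_le (by positivity) hz2
    have hnum : 2 * Real.pi * ‖Complex.sinh ((ρ : ℂ) * z)‖
        ≤ 2 * Real.pi * Real.exp (ρ * (1 + L)) := by
      have := hsinh z hz
      nlinarith [Real.pi_pos]
    have hdenlb : ‖r‖ ^ 2 / 2 ≤ ‖r‖ * ‖z‖ := by
      have := mul_le_mul_of_nonneg_left hz2 hrpos.le
      nlinarith
    rw [div_le_div_iff₀ (by positivity) (by positivity)]
    have hexp : (0:ℝ) < Real.exp (ρ * (1 + L)) := Real.exp_pos _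
    nlinarith [norm_nonneg (Complex.sinh ((ρ : ℂ) * z)), Real.pi_pos,
      mul_le_mul hnum hdenlb (by positivity) (by positivity)]
  have h1 := key (1 + Complex.I * r) (Or.inl rfl)
  have h2 := key (1 - Complex.I * r) (Or.inr rfl)
  calc ‖hSelC ρ r‖ ≤ ‖2 * (Real.pi : ℂ) * Complex.sinh ((ρ : ℂ) * (1 + Complex.I * r)) /
          (Complex.I * r * (1 + Complex.I * r))‖
        + ‖2 * (Real.pi : ℂ) * Complex.sinh ((ρ : ℂ) * (1 - Complex.I * r)) /
          (Complex.I * r * (1 - Complex.I * r))‖ := norm_sub_le _ _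
    _ ≤ 8 * Real.pi * Real.exp (ρ * (1 + L)) / ‖r‖ ^ 2 := by
        have : 8 * Real.pi * Real.exp (ρ * (1 + L)) / ‖r‖ ^ 2
            = 4 * Real.pi * Real.exp (ρ * (1 + L)) / ‖r‖ ^ 2
              + 4 * Real.pi * Real.exp (ρ * (1 + L)) / ‖r‖ ^ 2 := by ring
        rw [this]
        exact add_le_add h1 h2

/-- If `g` is an entire extension of
`h_±(r) = h_{R+sη}(r) h_η(r) / (π(sinh(2η) − 2η))`, then in every horizontal strip
`|Im r| < L` one has `|g(r)| ≤ C (1+|r|)^{−4}` with `C = C(L,R,η)`. -/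
theorem hPM_entire_strip_decay
    (R η s : ℝ) (hR : 1 ≤ R) (hη0 : 0 < η) (hη1 : η < 1) (hs : s = 1 ∨ s = -1)
    (g : ℂ → ℂ) (hg : Differentiable ℂ g)
    (hagree : ∀ r : ℂ, r ≠ 0 → r ≠ Complex.I → r ≠ -Complex.I →
      g r = hSelC (R + s * η) r * hSelC η r /
              ((Real.pi : ℂ) * Complex.ofReal (Real.sinh (2 * η) - 2 * η))) :
    ∀ L : ℝ, 0 < L → ∃ C : ℝ, 0 < C ∧ ∀ r : ℂ, |r.im| < L →
      ‖g r‖ ≤ C / (1 + ‖r‖) ^ 4 := by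
  intro L hL
  -- positivity of the denominator
  have hd0 : 0 < Real.sinh (2 * η) - 2 * η := by
    have := Real.self_lt_sinh_iff.2 (by linarith : (0:ℝ) < 2 * η)
    linarith
  set d : ℝ := Real.pi * (Real.sinh (2 * η) - 2 * η) with hd_def
  have hd : 0 < d := mul_pos Real.pi_pos hd0
  have hρ1 : 0 ≤ R + s * η := by rcases hs with rfl | rfl <;> nlinarith
  -- bound on the compact part
  obtain ⟨C₀, hC₀⟩ := (isCompact_closedBall (0:ℂ) 2).exists_bound_of_continuousOn
    hg.continuous.continuousOn
  set A : ℝ := 8 * Real.pi * Real.exp ((R + s * η) * (1 + L)) with hA_def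
  set B : ℝ := 8 * Real.pi * Real.exp (η * (1 + L)) with hB_def
  have hA : 0 < A := by positivity
  have hB : 0 < B := by positivity
  refine ⟨81 * (|C₀| + 1) + 16 * A * B / d, by positivity, ?_⟩
  intro r him
  set C : ℝ := 81 * (|C₀| + 1) + 16 * A * B / d with hC_def
  have hC : 0 < C := by positivity
  have hr1 : (0:ℝ) < 1 + ‖r‖ := by positivity
  rcases le_or_gt ‖r‖ 2 with hsm | hbig
  · -- small region: compact bound
    have hb : ‖g r‖ ≤ |C₀| + 1 := by
      have := hC₀ r (by simpa [Metric.mem_closedBall, Complex.dist_eq] using hsm)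
      have h2 : C₀ ≤ |C₀| := le_abs_self _
      linarith
    have hpow : (1 + ‖r‖) ^ 4 ≤ 81 := by
      have h3 : 1 + ‖r‖ ≤ 3 := by linarith
      calc (1 + ‖r‖) ^ 4 ≤ 3 ^ 4 := pow_le_pow_left₀ (by positivity) h3 4
        _ = 81 := by norm_num
    rw [le_div_iff₀ (by positivity)]
    calc ‖g r‖ * (1 + ‖r‖) ^ 4 ≤ (|C₀| + 1) * 81 := by
          have h1 : (0:ℝ) ≤ ‖g r‖ := norm_nonneg _
          nlinarith [abs_nonneg C₀]
      _ ≤ C := by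
          have : (0:ℝ) ≤ 16 * A * B / d := by positivity
          rw [hC_def]; linarith
  · -- large region: use the closed formula
    have hr0 : r ≠ 0 := by
      intro h; rw [h, norm_zero] at hbig; linarith
    have hrI : r ≠ Complex.I := by
      intro h; rw [h, Complex.norm_I] at hbig; linarith
    have hrnI : r ≠ -Complex.I := by
      intro h; rw [h, norm_neg, Complex.norm_I] at hbig; linarith
    rw [hagree r hr0 hrI hrnI]
    have hdnorm : ‖(Real.pi : ℂ) * Complex.ofReal (Real.sinh (2 * η) - 2 * η)‖ = d := by
      rw [norm_mul, Complex.norm_real, Complex.norm_real, Real.norm_eq_abs,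
        Real.norm_eq_abs, _root_.abs_of_nonneg Real.pi_pos.le, _root_.abs_of_nonneg hd0.le]
    have hbd1 := hSelC_bound (R + s * η) L hρ1 r hbig.le him.le
    have hbd2 := hSelC_bound η L hη0.le r hbig.le him.le
    rw [norm_div, hdnorm, norm_mul]
    have hr2 : (0:ℝ) < ‖r‖ ^ 2 := by positivity
    have hprod : ‖hSelC (R + s * η) r‖ * ‖hSelC η r‖ ≤ A * B / ‖r‖ ^ 4 := by
      have h := mul_le_mul hbd1 hbd2 (norm_nonneg _) (by positivity)
      calc ‖hSelC (R + s * η) r‖ * ‖hSelC η r‖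
          ≤ (A / ‖r‖ ^ 2) * (B / ‖r‖ ^ 2) := h
        _ = A * B / ‖r‖ ^ 4 := by field_simp
    have hrr : 1 + ‖r‖ ≤ 2 * ‖r‖ := by linarith
    have hpow4 : (1 + ‖r‖) ^ 4 ≤ 16 * ‖r‖ ^ 4 := by
      calc (1 + ‖r‖) ^ 4 ≤ (2 * ‖r‖) ^ 4 := pow_le_pow_left₀ hr1.le hrr 4
        _ = 16 * ‖r‖ ^ 4 := by ring
    have step : ‖hSelC (R + s * η) r‖ * ‖hSelC η r‖ / d ≤ A * B / ‖r‖ ^ 4 / d :=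
      div_le_div_of_nonneg_right hprod hd.le |>.trans_eq rfl
    refine step.trans ?_
    rw [div_le_div_iff₀ (by positivity) (by positivity)]
    have hr4 : (0:ℝ) < ‖r‖ ^ 4 := by positivity
    calc A * B / ‖r‖ ^ 4 * (1 + ‖r‖) ^ 4 ≤ A * B / ‖r‖ ^ 4 * (16 * ‖r‖ ^ 4) := by
          have hnn : (0:ℝ) ≤ A * B / ‖r‖ ^ 4 := by positivity
          exact mul_le_mul_of_nonneg_left hpow4 hnn
      _ = 16 * A * B * (‖r‖ ^ 4 / ‖r‖ ^ 4) := by ring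
      _ = 16 * A * B := by rw [div_self hr4.ne']; ring
      _ ≤ C * d := by
          have h1 : 16 * A * B / d * d = 16 * A * B := by field_simp
          have h2 : (0:ℝ) ≤ 81 * (|C₀| + 1) := by positivity
          rw [hC_def]; nlinarith
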